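/- Let $K$ be a field and $k \geq 1$ an integer. For $0 \leq i \leq 2k$ set $m_i = \max(i-k, 0)$, and define: (i) $z_i = u^i + m_i u^{i-k-1} \varepsilon$ in the ring of dual numbers over $K[u]$ (where $\varepsilon^2 = 0$), and (ii) $\varphi_i = w^i + m_i w^{i-k-1} t \in K[w,t]$. Suppose $c_{ij} \in K$ ($0 \leq i, j \leq 2k$) are such that $\sum_{i,j} c_{ij} z_i z_j = 0$. Then there exists a polynomial $f \in K[w]$ of degree at most $2k-2$ such that $\sum_{i,j} c_{ij} \varphi_i \varphi_j = f(w) \, t^2$; moreover $\sum_{i,j} c_{ij} z^{i+j} = 0$ in $K[z]$. -/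

import Mathlib

/-- The canonical coordinates of the balanced ribbon of genus `2k+1`:
`zᵢ = uⁱ + max(i-k,0)·u^{i-k-1}·ε` in the dual numbers over `K[u]`. -/
noncomputable def ribbonCoord (K : Type*) [Field K] (k i : ℕ) :
    DualNumber (Polynomial K) :=
  TrivSqZeroExt.inl (Polynomial.X ^ i) +
    TrivSqZeroExt.inr (((i - k : ℕ) : Polynomial K) * Polynomial.X ^ (i - k - 1))

/-- The `K[w,t]`-components of the renormalized canonical sections of the
`A_{2g+1}`-rational curve: `φᵢ = wⁱ + max(i-k,0)·w^{i-k-1}·t`, with `w = X 0`,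
`t = X 1`. -/
noncomputable def phiSection (K : Type*) [Field K] (k i : ℕ) :
    MvPolynomial (Fin 2) K :=
  MvPolynomial.X 0 ^ i +
    MvPolynomial.C ((i - k : ℕ) : K) * MvPolynomial.X 0 ^ (i - k - 1) *
      MvPolynomial.X 1

/-- Any quadratic relation among the ribbon coordinates `zᵢ`, evaluated on the
sections `φᵢ`, yields `f(w)·t²` with `deg f ≤ 2k-2`; moreover its evaluation at
`zⁱ` (replacing `zᵢ` by `zⁱ`) vanishes. -/
theorem ribbon_relation_deforms (K : Type*) [Field K] (k : ℕ) (hk : 1 ≤ k)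
    (c : ℕ → ℕ → K)
    (hrel : ∑ i ∈ Finset.range (2 * k + 1), ∑ j ∈ Finset.range (2 * k + 1),
      TrivSqZeroExt.inl (Polynomial.C (c i j)) * ribbonCoord K k i * ribbonCoord K k j
        = 0) :
    (∃ f : Polynomial K, f.natDegree ≤ 2 * k - 2 ∧
      ∑ i ∈ Finset.range (2 * k + 1), ∑ j ∈ Finset.range (2 * k + 1),
        MvPolynomial.C (c i j) * phiSection K k i * phiSection K k j =
      Polynomial.aeval (MvPolynomial.X 0 : MvPolynomial (Fin 2) K) f *
        MvPolynomial.X 1 ^ 2) ∧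
    ∑ i ∈ Finset.range (2 * k + 1), ∑ j ∈ Finset.range (2 * k + 1),
      Polynomial.C (c i j) * (Polynomial.X : Polynomial K) ^ (i + j) = 0 := by
  classical
  set a : ℕ → Polynomial K := fun i => Polynomial.X ^ i with ha
  set b : ℕ → Polynomial K := fun i =>
    ((i - k : ℕ) : Polynomial K) * Polynomial.X ^ (i - k - 1) with hb
  -- Expand each term of the relation in the dual numbers.
  have hterm : ∀ i j, TrivSqZeroExt.inl (Polynomial.C (c i j)) *
      ribbonCoord K k i * ribbonCoord K k j
      = TrivSqZeroExt.inl (Polynomial.C (c i j) * (a i * a j))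
        + TrivSqZeroExt.inr (Polynomial.C (c i j) * (a i * b j + b i * a j)) := by
    intro i j
    show TrivSqZeroExt.inl (Polynomial.C (c i j)) *
        (TrivSqZeroExt.inl (a i) + TrivSqZeroExt.inr (b i)) *
        (TrivSqZeroExt.inl (a j) + TrivSqZeroExt.inr (b j)) = _
    refine TrivSqZeroExt.ext ?_ ?_ <;>
      simp [TrivSqZeroExt.fst_mul, TrivSqZeroExt.snd_mul, smul_eq_mul,
        op_smul_eq_mul, mul_add, add_mul] <;> ring
  rw [Finset.sum_congr rfl fun i _ => Finset.sum_congr rfl fun j _ => hterm i j] at hrel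
  -- The first and second components give two polynomial identities.
  have hF : ∑ i ∈ Finset.range (2 * k + 1), ∑ j ∈ Finset.range (2 * k + 1),
      Polynomial.C (c i j) * (a i * a j) = 0 := by
    have := congrArg TrivSqZeroExt.fst hrel
    simpa [TrivSqZeroExt.fst_sum] using this
  have hG : ∑ i ∈ Finset.range (2 * k + 1), ∑ j ∈ Finset.range (2 * k + 1),
      Polynomial.C (c i j) * (a i * b j + b i * a j) = 0 := by
    have := congrArg TrivSqZeroExt.snd hrel
    simpa [TrivSqZeroExt.snd_sum] using this
  constructor
  · -- the MvPolynomial computation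
    set ι : Polynomial K →ₐ[K] MvPolynomial (Fin 2) K :=
      Polynomial.aeval (MvPolynomial.X 0) with hι
    set T : MvPolynomial (Fin 2) K := MvPolynomial.X 1 with hT
    have hphi : ∀ i, phiSection K k i = ι (a i) + ι (b i) * T := by
      intro i
      simp [phiSection, hι, ha, hb, map_natCast, hT]
    have hC : ∀ i j, MvPolynomial.C (c i j) = ι (Polynomial.C (c i j)) := by
      intro i j; simp [hι]
    have hterm2 : ∀ i j, MvPolynomial.C (c i j) * phiSection K k i * phiSection K k j
        = ι (Polynomial.C (c i j) * (a i * a j))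
          + ι (Polynomial.C (c i j) * (a i * b j + b i * a j)) * T
          + ι (Polynomial.C (c i j) * (b i * b j)) * T ^ 2 := by
      intro i j
      rw [hphi, hphi, hC]
      simp only [map_mul, map_add]
      ring
    refine ⟨∑ i ∈ Finset.range (2 * k + 1), ∑ j ∈ Finset.range (2 * k + 1),
      Polynomial.C (c i j) * (b i * b j), ?_, ?_⟩
    · -- degree bound
      have hbdeg : ∀ i ∈ Finset.range (2 * k + 1), (b i).natDegree ≤ k - 1 := by
        intro i hi
        rw [Finset.mem_range] at hi
        calc (b i).natDegree ≤ (((i - k : ℕ) : Polynomial K)).natDegree +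
              (Polynomial.X ^ (i - k - 1) : Polynomial K).natDegree :=
              Polynomial.natDegree_mul_le
          _ ≤ 0 + (i - k - 1) := by
              gcongr
              · exact le_of_eq (Polynomial.natDegree_natCast _)
              · exact Polynomial.natDegree_X_pow_le _
          _ ≤ k - 1 := by omega
      apply Polynomial.natDegree_sum_le_of_forall_le
      intro i hi
      apply Polynomial.natDegree_sum_le_of_forall_le
      intro j hj
      calc (Polynomial.C (c i j) * (b i * b j)).natDegree
          ≤ (Polynomial.C (c i j)).natDegree + (b i * b j).natDegree :=
            Polynomial.natDegree_mul_le
        _ ≤ 0 + ((b i).natDegree + (b j).natDegree) := by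
            gcongr
            · exact le_of_eq (Polynomial.natDegree_C _)
            · exact Polynomial.natDegree_mul_le
        _ ≤ 0 + ((k - 1) + (k - 1)) := by gcongr <;> [exact hbdeg i hi; exact hbdeg j hj]
        _ ≤ 2 * k - 2 := by omega
    · rw [Finset.sum_congr rfl fun i _ => Finset.sum_congr rfl fun j _ => hterm2 i j]
      simp only [Finset.sum_add_distrib, ← Finset.sum_mul, ← map_sum]
      rw [hF, hG]
      simp [hι]
  · -- the relation on the rational normal curve
    have : ∀ i j : ℕ, Polynomial.C (c i j) * (Polynomial.X : Polynomial K) ^ (i + j)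
        = Polynomial.C (c i j) * (a i * a j) := by
      intro i j; rw [ha]; simp [pow_add]
    rw [Finset.sum_congr rfl fun i _ => Finset.sum_congr rfl fun j _ => this i j]
    exact hF
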